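/- Let n ≥ 3 and let c : Fin n → Fin n → Fin n → Fin n → Fin n → Fin n → ℝ satisfy: (i) c i j k l m p = c j i k l m p = c i j l k m p = c i j k l p m; (ii) the cyclic identity c i j k l m p + c i j k m p l + c i j k p l m = 0; (iii) Lorentz invariance as a rank-6 tensor; (iv) c i j k l m p = 0 whenever i ≠ j. Then there exists B ∈ ℝ such that for all i, j and every w : Fin n → Fin n → Fin n → Fin n → ℝ with w k l m p = w l k m p = w k l p m: Σ_{k,l,m,p} c i j k l m p · w k l m p = B · Rform(w) · ε i · (if i = j then 1 else 0). -/

import Mathlib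

open Matrix

noncomputable section

namespace GeomActions

/-- Signature function: `ε 0 = −1`, `ε i = 1` for `i ≠ 0`. -/
def eps (n : ℕ) (i : Fin n) : ℝ := if (i : ℕ) = 0 then -1 else 1

/-- The Minkowski form `η = diag(−1, 1, …, 1)` of signature `(1, n−1)`. -/
def etaMat (n : ℕ) : Matrix (Fin n) (Fin n) ℝ := Matrix.diagonal (eps n)

/-- The space of (components of) 2-jets of metrics: triples `(w₂, w₃, w₄)` encoding
`(g_{ij}, g_{ij,k}, g_{ij,kl})` at a point in a chart. -/
abbrev W (n : ℕ) :=
  (Fin n → Fin n → ℝ) × (Fin n → Fin n → Fin n → ℝ) × (Fin n → Fin n → Fin n → Fin n → ℝ)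

/-- An admissible parameter triple `(J, S, C)` for a coordinate change:
`J` invertible, `S` symmetric in its last two indices, `C` symmetric in its last three. -/
structure Admissible (n : ℕ) (J : Matrix (Fin n) (Fin n) ℝ)
    (S : Fin n → Fin n → Fin n → ℝ) (C : Fin n → Fin n → Fin n → Fin n → ℝ) : Prop where
  hJ : IsUnit J
  hS : ∀ a i k, S a i k = S a k i
  hC1 : ∀ a i k l, C a i k l = C a k i l
  hC2 : ∀ a i k l, C a i k l = C a i l k

/-- Transformation rule `Φ_{J,S,C}` for the 2-jet of a metric under a coordinate change. -/
def Phi (n : ℕ) (J : Matrix (Fin n) (Fin n) ℝ) (S : Fin n → Fin n → Fin n → ℝ)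
    (C : Fin n → Fin n → Fin n → Fin n → ℝ) (w : W n) : W n :=
  ⟨fun i j => ∑ a, ∑ b, J a i * J b j * w.1 a b,
   fun i j k =>
     (∑ a, ∑ b, ∑ c, J a i * J b j * J c k * w.2.1 a b c) +
       ∑ a, ∑ b, (S a i k * J b j + J a i * S b j k) * w.1 a b,
   fun i j k l =>
     (∑ a, ∑ b, ∑ c, ∑ d, J a i * J b j * J c k * J d l * w.2.2 a b c d) +
     (∑ a, ∑ b, ∑ c,
       (S a i l * J b j * J c k + J a i * S b j l * J c k + J a i * J b j * S c k l +
         J c l * S a i k * J b j + J c l * J a i * S b j k) * w.2.1 a b c) +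
     ∑ a, ∑ b,
       (S a i k * S b j l + S a i l * S b j k + C a i k l * J b j + J a i * C b j k l) * w.1 a b⟩

/-- `w ∈ W n` is a metric 2-jet: `w₂` symmetric and congruent to `η`, and `w₃`, `w₄`
have the symmetries of derivatives of a metric. -/
def MetricJet (n : ℕ) (w : W n) : Prop :=
  (∀ i j, w.1 i j = w.1 j i) ∧
  (∃ P : Matrix (Fin n) (Fin n) ℝ, IsUnit P ∧ Pᵀ * Matrix.of w.1 * P = etaMat n) ∧
  (∀ i j k, w.2.1 i j k = w.2.1 j i k) ∧
  (∀ i j k l, w.2.2 i j k l = w.2.2 j i k l ∧ w.2.2 i j k l = w.2.2 i j l k)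

/-- The symmetries `w i j k l = w j i k l = w i j l k` of the second-derivative variables. -/
def SymW4 (n : ℕ) (w : Fin n → Fin n → Fin n → Fin n → ℝ) : Prop :=
  ∀ i j k l, w i j k l = w j i k l ∧ w i j k l = w i j l k

/-- Symmetry under all permutations of the last three arguments. -/
def Sym3Last (n : ℕ) (c : Fin n → Fin n → Fin n → Fin n → ℝ) : Prop :=
  ∀ i j k l, c i j k l = c i k j l ∧ c i j k l = c i j l k

/-- The scalar curvature at a point, in Lorentz normal coordinates where
`g_{ij} = η i j`, `g_{ij,k} = 0`, `g_{ij,kl} = w4 i j k l`. -/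
def Rform (n : ℕ) (w4 : Fin n → Fin n → Fin n → Fin n → ℝ) : ℝ :=
  ∑ i, ∑ j, eps n i * eps n j * (w4 i j i j - w4 i i j j)

/-- The contravariant Ricci tensor at a point, in Lorentz normal coordinates. -/
def Ricform (n : ℕ) (w4 : Fin n → Fin n → Fin n → Fin n → ℝ) (i j : Fin n) : ℝ :=
  (1 / 2) * eps n i * eps n j *
    ∑ k, eps n k * (w4 i k j k + w4 j k i k - w4 i j k k - w4 k k i j)

/-- The space of 2-jets of a metric together with 1-jets `(D_I, D_{I,j})` of a
type-(0,m) tensor field. -/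
abbrev Y (n m : ℕ) :=
  W n × ((Fin m → Fin n) → ℝ) × ((Fin m → Fin n) → Fin n → ℝ)

/-- Transformation rule `Ψ_{J,S,C}` for the pair (metric 2-jet, matter field 1-jet). -/
def Psi (n m : ℕ) (J : Matrix (Fin n) (Fin n) ℝ) (S : Fin n → Fin n → Fin n → ℝ)
    (C : Fin n → Fin n → Fin n → Fin n → ℝ) (p : Y n m) : Y n m :=
  ⟨Phi n J S C p.1,
   fun I => ∑ A : Fin m → Fin n, (∏ r, J (A r) (I r)) * p.2.1 A,
   fun I j =>
     (∑ A : Fin m → Fin n, ∑ b, (∏ r, J (A r) (I r)) * J b j * p.2.2 A b) +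
     ∑ r : Fin m, ∑ A : Fin m → Fin n,
       S (A r) (I r) j * (∏ s ∈ Finset.univ.erase r, J (A s) (I s)) * p.2.1 A⟩

/-- The full antisymmetrisation `Alt y′` of the rank-(m+1) tensor
`z I = y′ (I ∘ castSucc) (I (last m))` determined by the derivative variables `y′`. -/
def altD (n m : ℕ) (y' : (Fin m → Fin n) → Fin n → ℝ) (I : Fin (m + 1) → Fin n) : ℝ :=
  (1 / (Nat.factorial (m + 1) : ℝ)) *
    ∑ σ : Equiv.Perm (Fin (m + 1)),
      ((Equiv.Perm.sign σ : ℤ) : ℝ) *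
        y' (fun r => I (σ (Fin.castSucc r))) (I (σ (Fin.last m)))

/-- Lorentz matrices: `Aᵀ * η * A = η`. -/
def IsLorentz (n : ℕ) (A : Matrix (Fin n) (Fin n) ℝ) : Prop :=
  Aᵀ * etaMat n * A = etaMat n

/-- Lorentz invariance of a rank-2 tensor. -/
def LorentzInv2 (n : ℕ) (b : Fin n → Fin n → ℝ) : Prop :=
  ∀ A : Matrix (Fin n) (Fin n) ℝ, IsLorentz n A →
    ∀ i j, b i j = ∑ p, ∑ q, A i p * A j q * b p q

/-- Lorentz invariance of a rank-4 tensor. -/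
def LorentzInv4 (n : ℕ) (a : Fin n → Fin n → Fin n → Fin n → ℝ) : Prop :=
  ∀ A : Matrix (Fin n) (Fin n) ℝ, IsLorentz n A →
    ∀ i j k l, a i j k l = ∑ p, ∑ q, ∑ r, ∑ s, A i p * A j q * A k r * A l s * a p q r s

/-- Lorentz invariance of a rank-6 tensor. -/
def LorentzInv6 (n : ℕ) (a : Fin n → Fin n → Fin n → Fin n → Fin n → Fin n → ℝ) : Prop :=
  ∀ A : Matrix (Fin n) (Fin n) ℝ, IsLorentz n A →
    ∀ i j k l m p, a i j k l m p =
      ∑ a₁, ∑ a₂, ∑ a₃, ∑ a₄, ∑ a₅, ∑ a₆,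
        A i a₁ * A j a₂ * A k a₃ * A l a₄ * A m a₅ * A p a₆ * a a₁ a₂ a₃ a₄ a₅ a₆

/-- Lorentz invariance of a rank-k tensor indexed by `Fin k → Fin n`. -/
def LorentzInvT (n k : ℕ) (T : (Fin k → Fin n) → ℝ) : Prop :=
  ∀ A : Matrix (Fin n) (Fin n) ℝ, IsLorentz n A →
    ∀ I : Fin k → Fin n, T I = ∑ J : Fin k → Fin n, (∏ r, A (I r) (J r)) * T J

/-- Number of occurrences of `v` among `(i, j, k, l)`. -/
def cnt4 (n : ℕ) (i j k l v : Fin n) : ℕ :=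
  (if i = v then 1 else 0) + (if j = v then 1 else 0) + (if k = v then 1 else 0) +
    (if l = v then 1 else 0)

/-- Coordinate direction in the `w₂`-variables. -/
def e2 (n : ℕ) (i j : Fin n) : W n :=
  ⟨fun a b => if a = i ∧ b = j then 1 else 0, 0, 0⟩

/-- Coordinate direction in the `w₃`-variables. -/
def e3 (n : ℕ) (i j k : Fin n) : W n :=
  ⟨0, fun a b c => if a = i ∧ b = j ∧ c = k then 1 else 0, 0⟩

/-- Coordinate direction in the `w₄`-variables. -/
def e4 (n : ℕ) (i j k l : Fin n) : W n :=
  ⟨0, 0, fun a b c d => if a = i ∧ b = j ∧ c = k ∧ d = l then 1 else 0⟩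

/-- Coordinate direction in the `y′`-variables. -/
def eY' (n m : ℕ) (I : Fin m → Fin n) (j : Fin n) : Y n m :=
  ⟨0, 0, fun A b => if A = I ∧ b = j then 1 else 0⟩

section proof14
variable {n : ℕ}

lemma isLorentz_of (A : Matrix (Fin n) (Fin n) ℝ)
    (h : ∀ a b, (∑ w, eps n w * (A w a * A w b)) = if a = b then eps n a else 0) :
    IsLorentz n A := by
  unfold IsLorentz etaMat
  ext a b
  rw [Matrix.mul_assoc, Matrix.mul_apply, Matrix.diagonal_apply]
  rw [← h a b]
  refine Finset.sum_congr rfl fun w _ => ?_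
  rw [Matrix.diagonal_mul, Matrix.transpose_apply]
  ring

def sg (v w : Fin n) : ℝ := if w = v then -1 else 1

def flipM (v : Fin n) : Matrix (Fin n) (Fin n) ℝ := fun w a => if a = w then sg v w else 0

lemma sg_sq (v w : Fin n) : sg v w * sg v w = 1 := by
  unfold sg; by_cases h : w = v <;> simp [h]

lemma flip_lorentz (v : Fin n) : IsLorentz n (flipM v) := by
  refine isLorentz_of _ fun a b => ?_
  by_cases hab : a = b
  · subst hab
    rw [Finset.sum_eq_single a]
    · simp [flipM, sg_sq]
    · intro w _ hw; simp [flipM, Ne.symm hw]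
    · simp
  · rw [if_neg hab]
    refine Finset.sum_eq_zero fun w _ => ?_
    by_cases haw : a = w
    · subst haw; simp [flipM, show ¬ b = a from fun h => hab h.symm]
    · simp [flipM, haw]

lemma sum_flip (v x : Fin n) (g : Fin n → ℝ) :
    (∑ a, flipM v x a * g a) = sg v x * g x := by
  rw [Finset.sum_eq_single x]
  · simp [flipM]
  · intro a _ ha; simp [flipM, ha]
  · simp

lemma hlor' (c : Fin n → Fin n → Fin n → Fin n → Fin n → Fin n → ℝ)
    (hlor : LorentzInv6 n c) (A : Matrix (Fin n) (Fin n) ℝ) (hA : IsLorentz n A)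
    (i j k l m p : Fin n) :
    c i j k l m p = ∑ a₁, A i a₁ * ∑ a₂, A j a₂ * ∑ a₃, A k a₃ * ∑ a₄, A l a₄ *
      ∑ a₅, A m a₅ * ∑ a₆, A p a₆ * c a₁ a₂ a₃ a₄ a₅ a₆ := by
  rw [hlor A hA i j k l m p]
  simp only [Finset.mul_sum]
  refine Finset.sum_congr rfl fun a₁ _ => Finset.sum_congr rfl fun a₂ _ =>
    Finset.sum_congr rfl fun a₃ _ => Finset.sum_congr rfl fun a₄ _ =>
    Finset.sum_congr rfl fun a₅ _ => Finset.sum_congr rfl fun a₆ _ => by ring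

def bst (z x : Fin n) : Matrix (Fin n) (Fin n) ℝ := fun w a =>
  if w = z then (if a = z then 5/3 else if a = x then 4/3 else 0)
  else if w = x then (if a = z then 4/3 else if a = x then 5/3 else 0)
  else if a = w then 1 else 0

lemma sum_bst (z x : Fin n) (hzx : z ≠ x) (w : Fin n) (g : Fin n → ℝ) :
    (∑ a, bst z x w a * g a) =
      if w = z then 5/3 * g z + 4/3 * g x
      else if w = x then 4/3 * g z + 5/3 * g x else g w := by
  by_cases hwz : w = z
  · subst hwz
    rw [if_pos rfl]
    rw [Finset.sum_eq_add_of_mem w x (Finset.mem_univ _) (Finset.mem_univ _) hzx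
      (fun a _ ha => by simp [bst, ha.1, ha.2])]
    simp [bst, hzx, Ne.symm hzx]
  · by_cases hwx : w = x
    · subst hwx
      rw [if_neg hwz, if_pos rfl]
      rw [Finset.sum_eq_add_of_mem z w (Finset.mem_univ _) (Finset.mem_univ _) hzx
        (fun a _ ha => by simp [bst, hwz, ha.1, ha.2])]
      simp [bst, hwz, hzx, Ne.symm hzx]
    · rw [if_neg hwz, if_neg hwx]
      rw [Finset.sum_eq_single w]
      · simp [bst, hwz, hwx]
      · intro a _ ha; simp [bst, hwz, hwx, ha]
      · simp

lemma sum_split (z x : Fin n) (hzx : z ≠ x) (F : Fin n → ℝ) :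
    (∑ w, F w) = F z + F x + ∑ w ∈ (Finset.univ.erase z).erase x, F w := by
  rw [← Finset.add_sum_erase _ F (Finset.mem_univ z)]
  rw [← Finset.add_sum_erase _ F (Finset.mem_erase.2 ⟨Ne.symm hzx, Finset.mem_univ x⟩)]
  ring

lemma bst_lorentz (z x : Fin n) (hz : eps n z = -1) (hx : eps n x = 1) (hzx : z ≠ x) :
    IsLorentz n (bst z x) := by
  have hxz : x ≠ z := Ne.symm hzx
  refine isLorentz_of _ fun a b => ?_
  rw [sum_split z x hzx]
  have rz : ∀ y, bst z x z y = if y = z then 5/3 else if y = x then 4/3 else 0 := by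
    intro y; simp [bst]
  have rx : ∀ y, bst z x x y = if y = z then 4/3 else if y = x then 5/3 else 0 := by
    intro y; simp [bst, hxz]
  have tail : (∑ w ∈ (Finset.univ.erase z).erase x, eps n w * (bst z x w a * bst z x w b)) =
      if a ∈ (Finset.univ.erase z).erase x then (if b = a then eps n a else 0) else 0 := by
    rw [Finset.sum_congr rfl (fun w hw => ?_), Finset.sum_ite_eq']
    case _ =>
      have hwx : w ≠ x := (Finset.mem_erase.1 hw).1
      have hwz : w ≠ z := (Finset.mem_erase.1 (Finset.mem_erase.1 hw).2).1
      show eps n w * (bst z x w a * bst z x w b) = if w = a then (if b = w then eps n w else 0) else 0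
      have rw' : ∀ y, bst z x w y = if y = w then 1 else 0 := by
        intro y; simp [bst, hwz, hwx]
      rw [rw', rw']
      by_cases haw : a = w
      · by_cases hbw : b = w <;> simp [haw, hbw]
      · simp [haw, show ¬ w = a from fun h => haw h.symm]
  rw [tail, rz, rz, rx, rx]
  simp only [Finset.mem_erase, Finset.mem_univ, and_true]
  by_cases haz : a = z <;> by_cases hbz : b = z <;> by_cases hax : a = x <;>
    by_cases hbx : b = x <;> by_cases hab : a = b <;>
    simp only [haz, hbz, hax, hbx, hab, hz, hx, hzx, hxz, if_true, if_false, ne_eq,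
      not_true, not_false_iff] <;>
    simp_all <;> try norm_num
  all_goals exact fun h => absurd h.symm (by assumption)

variable {c : Fin n → Fin n → Fin n → Fin n → Fin n → Fin n → ℝ}

lemma flipinv (hlor : LorentzInv6 n c) (v i j k l m p : Fin n) :
    c i j k l m p = sg v i * sg v j * sg v k * sg v l * sg v m * sg v p * c i j k l m p := by
  have e := hlor' c hlor (flipM v) (flip_lorentz v) i j k l m p
  simp only [sum_flip] at e
  exact e.trans (by ring)

lemma van_k (hlor : LorentzInv6 n c) (i k l m p : Fin n)
    (h1 : k ≠ l) (h2 : k ≠ m) (h3 : k ≠ p) : c i i k l m p = 0 := by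
  have e := flipinv hlor k i i k l m p
  rw [show sg k k = -1 from if_pos rfl,
    show sg k l = 1 from if_neg (Ne.symm h1),
    show sg k m = 1 from if_neg (Ne.symm h2),
    show sg k p = 1 from if_neg (Ne.symm h3), sg_sq] at e
  nlinarith [e]

lemma van_l (hlor : LorentzInv6 n c) (i k l m p : Fin n)
    (h1 : l ≠ k) (h2 : l ≠ m) (h3 : l ≠ p) : c i i k l m p = 0 := by
  have e := flipinv hlor l i i k l m p
  rw [show sg l l = -1 from if_pos rfl,
    show sg l k = 1 from if_neg (Ne.symm h1),
    show sg l m = 1 from if_neg (Ne.symm h2),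
    show sg l p = 1 from if_neg (Ne.symm h3), sg_sq] at e
  nlinarith [e]

lemma van_m (hlor : LorentzInv6 n c) (i k l m p : Fin n)
    (h1 : m ≠ k) (h2 : m ≠ l) (h3 : m ≠ p) : c i i k l m p = 0 := by
  have e := flipinv hlor m i i k l m p
  rw [show sg m m = -1 from if_pos rfl,
    show sg m k = 1 from if_neg (Ne.symm h1),
    show sg m l = 1 from if_neg (Ne.symm h2),
    show sg m p = 1 from if_neg (Ne.symm h3), sg_sq] at e
  nlinarith [e]

lemma van_p (hlor : LorentzInv6 n c) (i k l m p : Fin n)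
    (h1 : p ≠ k) (h2 : p ≠ l) (h3 : p ≠ m) : c i i k l m p = 0 := by
  have e := flipinv hlor p i i k l m p
  rw [show sg p p = -1 from if_pos rfl,
    show sg p k = 1 from if_neg (Ne.symm h1),
    show sg p l = 1 from if_neg (Ne.symm h2),
    show sg p m = 1 from if_neg (Ne.symm h3), sg_sq] at e
  nlinarith [e]


lemma R5 (hlor : LorentzInv6 n c)
    (hoffdiag : ∀ i j k l m p, i ≠ j → c i j k l m p = 0)
    (z x y y' : Fin n) (hz : eps n z = -1) (hx : eps n x = 1) (hzx : z ≠ x)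
    (hyz : y ≠ z) (hyx : y ≠ x) (hy'z : y' ≠ z) (hy'x : y' ≠ x) :
    c x x y y' y y' = - c z z y y' y y' := by
  have hxz : x ≠ z := Ne.symm hzx
  have e := hlor' c hlor (bst z x) (bst_lorentz z x hz hx hzx) x x y y' y y'
  simp only [sum_bst z x hzx, if_neg hxz, if_neg hyz, if_neg hyx, if_neg hy'z, if_neg hy'x,
    if_true, eq_self_iff_true] at e
  rw [hoffdiag z x y y' y y' hzx, hoffdiag x z y y' y y' hxz] at e
  linarith

lemma R123 (hlor : LorentzInv6 n c)
    (hsym : ∀ i j k l m p, c i j k l m p = c j i k l m p ∧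
      c i j k l m p = c i j l k m p ∧ c i j k l m p = c i j k l p m)
    (hcyc : ∀ i j k l m p, c i j k l m p + c i j k m p l + c i j k p l m = 0)
    (hoffdiag : ∀ i j k l m p, i ≠ j → c i j k l m p = 0)
    (z x y : Fin n) (hz : eps n z = -1) (hx : eps n x = 1) (hzx : z ≠ x)
    (hyz : y ≠ z) (hyx : y ≠ x) :
    c z z x y x y = - c z z z y z y ∧ c x x z y z y = c z z x y x y ∧
      c x x x y x y = - c z z x y x y := by
  have hxz : x ≠ z := Ne.symm hzx
  have hL := bst_lorentz z x hz hx hzx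
  have hod_zx : ∀ k l m p, c z x k l m p = 0 := fun k l m p => hoffdiag _ _ _ _ _ _ hzx
  have hod_xz : ∀ k l m p, c x z k l m p = 0 := fun k l m p => hoffdiag _ _ _ _ _ _ hxz
  have hv1 : ∀ i : Fin n, c i i z y x y = 0 := fun i => van_k hlor _ _ _ _ _ hyz.symm hzx hyz.symm
  have hv2 : ∀ i : Fin n, c i i x y z y = 0 := fun i => van_k hlor _ _ _ _ _ hyx.symm hxz hyx.symm
  have hv3 : ∀ i : Fin n, c i i z x y y = 0 := fun i => van_k hlor _ _ _ _ _ hzx hyz.symm hyz.symm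
  have hv4 : ∀ i : Fin n, c i i x z y y = 0 := fun i => van_k hlor _ _ _ _ _ hxz hyx.symm hyx.symm
  have hP : ∀ i a b : Fin n, c i i a a b b = -2 * c i i a b a b := by
    intro i a b
    have h1 := hcyc i i a b a b
    have h2 : c i i a b b a = c i i a b a b := (hsym i i a b b a).2.2
    linarith
  have e1 := hlor' c hlor (bst z x) hL z x z x y y
  have e2 := hlor' c hlor (bst z x) hL z z x y x y
  have e3 := hlor' c hlor (bst z x) hL z z z y z y
  simp only [sum_bst z x hzx, if_neg hxz, if_neg hyz, if_neg hyx,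
    if_true, eq_self_iff_true] at e1 e2 e3
  simp only [hod_zx, hod_xz, hv1, hv2, hv3, hv4, hP] at e1 e2 e3
  refine ⟨by linarith, by linarith, by linarith⟩

lemma R4 (hlor : LorentzInv6 n c)
    (hsym : ∀ i j k l m p, c i j k l m p = c j i k l m p ∧
      c i j k l m p = c i j l k m p ∧ c i j k l m p = c i j k l p m)
    (hcyc : ∀ i j k l m p, c i j k l m p + c i j k m p l + c i j k p l m = 0)
    (hoffdiag : ∀ i j k l m p, i ≠ j → c i j k l m p = 0)
    (z x : Fin n) (hz : eps n z = -1) (hx : eps n x = 1) (hzx : z ≠ x) :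
    c x x z x z x = - c z z z x z x := by
  have hxz : x ≠ z := Ne.symm hzx
  have hL := bst_lorentz z x hz hx hzx
  have hod_zx : ∀ k l m p, c z x k l m p = 0 := fun k l m p => hoffdiag _ _ _ _ _ _ hzx
  have hod_xz : ∀ k l m p, c x z k l m p = 0 := fun k l m p => hoffdiag _ _ _ _ _ _ hxz
  have hall : ∀ i a : Fin n, c i i a a a a = 0 := by
    intro i a; have := hcyc i i a a a a; linarith
  have hw1 : ∀ i : Fin n, c i i z z z x = 0 := fun i => van_p hlor _ _ _ _ _ hxz hxz hxz
  have hw2 : ∀ i : Fin n, c i i z z x z = 0 := fun i => van_m hlor _ _ _ _ _ hxz hxz hxz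
  have hw3 : ∀ i : Fin n, c i i z x z z = 0 := fun i => van_l hlor _ _ _ _ _ hxz hxz hxz
  have hw4 : ∀ i : Fin n, c i i x z z z = 0 := fun i => van_k hlor _ _ _ _ _ hxz hxz hxz
  have hw5 : ∀ i : Fin n, c i i x x x z = 0 := fun i => van_p hlor _ _ _ _ _ hzx hzx hzx
  have hw6 : ∀ i : Fin n, c i i x x z x = 0 := fun i => van_m hlor _ _ _ _ _ hzx hzx hzx
  have hw7 : ∀ i : Fin n, c i i x z x x = 0 := fun i => van_l hlor _ _ _ _ _ hzx hzx hzx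
  have hw8 : ∀ i : Fin n, c i i z x x x = 0 := fun i => van_k hlor _ _ _ _ _ hzx hzx hzx
  have hP : ∀ i a b : Fin n, c i i a a b b = -2 * c i i a b a b := by
    intro i a b
    have h1 := hcyc i i a b a b
    have h2 : c i i a b b a = c i i a b a b := (hsym i i a b b a).2.2
    linarith
  have hq2 : ∀ i : Fin n, c i i z x x z = c i i z x z x := fun i => (hsym i i z x x z).2.2
  have hq1 : ∀ i : Fin n, c i i x z x z = c i i z x z x := fun i =>
    ((hsym i i x z x z).2.1).trans (hq2 i)
  have hq3 : ∀ i : Fin n, c i i x z z x = c i i z x z x := fun i => (hsym i i x z z x).2.1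
  have e := hlor' c hlor (bst z x) hL x x z x z x
  simp only [sum_bst z x hzx, if_neg hxz, if_true, eq_self_iff_true] at e
  simp only [hod_zx, hod_xz, hall, hw1, hw2, hw3, hw4, hw5, hw6, hw7, hw8, hP, hq1, hq2, hq3] at e
  linarith

lemma master (hn : 3 ≤ n) (hlor : LorentzInv6 n c)
    (hsym : ∀ i j k l m p, c i j k l m p = c j i k l m p ∧
      c i j k l m p = c i j l k m p ∧ c i j k l m p = c i j k l p m)
    (hcyc : ∀ i j k l m p, c i j k l m p + c i j k m p l + c i j k p l m = 0)
    (hoffdiag : ∀ i j k l m p, i ≠ j → c i j k l m p = 0) :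
    ∃ q : ℝ, ∀ i a b : Fin n, a ≠ b → c i i a b a b = q * (eps n i * eps n a * eps n b) := by
  have h0 : 0 < n := by omega
  have h1 : 1 < n := by omega
  set z : Fin n := ⟨0, h0⟩ with hzdef
  set o : Fin n := ⟨1, h1⟩ with hodef
  have hz : eps n z = -1 := by simp [eps, hzdef]
  have hsp : ∀ x : Fin n, x ≠ z → eps n x = 1 := by
    intro x hx
    unfold eps
    rw [if_neg]
    intro h
    exact hx (Fin.ext h)
  have hoz : o ≠ z := by simp [Fin.ext_iff]
  have ho : eps n o = 1 := hsp o hoz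
  have hQs : ∀ i a b : Fin n, c i i b a b a = c i i a b a b := fun i a b =>
    ((hsym i i b a b a).2.1).trans ((hsym i i a b b a).2.2)
  refine ⟨c z z z o z o, ?_⟩
  have hbeta : ∀ b : Fin n, b ≠ z → c z z z b z b = c z z z o z o := by
    intro b hb
    by_cases hbo : b = o
    · rw [hbo]
    · have h1 := (R123 hlor hsym hcyc hoffdiag z o b hz ho (Ne.symm hoz) hb hbo).1
      have h2 := (R123 hlor hsym hcyc hoffdiag z b o hz (hsp b hb) (Ne.symm hb) hoz
        (fun h => hbo h.symm)).1
      have h3 : c z z b o b o = c z z o b o b := hQs z o b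
      linarith
  have halpha : ∀ a b : Fin n, a ≠ z → b ≠ z → a ≠ b → c z z a b a b = - c z z z o z o := by
    intro a b ha hb hab
    have h1 := (R123 hlor hsym hcyc hoffdiag z a b hz (hsp a ha) (Ne.symm ha) hb
      (fun h => hab h.symm)).1
    have h2 := hbeta b hb
    linarith
  intro i a b hab
  by_cases hiz : i = z
  · subst hiz
    rw [hz]
    by_cases haz : a = z
    · subst haz
      have hbz : b ≠ z := Ne.symm hab
      rw [hz, hsp b hbz, hbeta b hbz]
      ring
    · by_cases hbz : b = z
      · subst hbz
        rw [hz, hsp a haz, hQs z z a, hbeta a haz]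
        ring
      · rw [hsp a haz, hsp b hbz, halpha a b haz hbz hab]
        ring
  · have hi : eps n i = 1 := hsp i hiz
    have hzi : z ≠ i := fun h => hiz h.symm
    rw [hi]
    by_cases haz : a = z
    · subst haz
      have hbz : b ≠ z := Ne.symm hab
      rw [hz, hsp b hbz]
      by_cases hbi : b = i
      · subst hbi
        rw [R4 hlor hsym hcyc hoffdiag z b hz hi hzi, hbeta b hbz]
        ring
      · rw [(R123 hlor hsym hcyc hoffdiag z i b hz hi hzi hbz hbi).2.1,
          halpha i b hiz hbz (fun h => hbi h.symm)]
        ring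
    · by_cases hbz : b = z
      · subst hbz
        rw [hz, hsp a haz, hQs i z a]
        by_cases hai : a = i
        · subst hai
          rw [R4 hlor hsym hcyc hoffdiag z a hz hi hzi, hbeta a haz]
          ring
        · rw [(R123 hlor hsym hcyc hoffdiag z i a hz hi hzi haz hai).2.1,
            halpha i a hiz haz (fun h => hai h.symm)]
          ring
      · rw [hsp a haz, hsp b hbz]
        by_cases hai : a = i
        · subst hai
          rw [(R123 hlor hsym hcyc hoffdiag z a b hz hi hzi hbz (Ne.symm hab)).2.2,
            halpha a b hiz hbz hab]
          ring
        · by_cases hbi : b = i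
          · subst hbi
            rw [hQs b b a,
              (R123 hlor hsym hcyc hoffdiag z b a hz hi hzi haz hai).2.2,
              halpha b a hiz haz (Ne.symm hab)]
            ring
          · rw [R5 hlor hoffdiag z i a b hz hi hzi haz hai hbz hbi,
              halpha a b haz hbz hab]
            ring

lemma pointwise (hn : 3 ≤ n) (hlor : LorentzInv6 n c)
    (hsym : ∀ i j k l m p, c i j k l m p = c j i k l m p ∧
      c i j k l m p = c i j l k m p ∧ c i j k l m p = c i j k l p m)
    (hcyc : ∀ i j k l m p, c i j k l m p + c i j k m p l + c i j k p l m = 0)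
    (hoffdiag : ∀ i j k l m p, i ≠ j → c i j k l m p = 0) :
    ∃ q : ℝ, ∀ i j k l m p : Fin n, c i j k l m p =
      q * eps n i * (if i = j then 1 else 0) *
        ((if k = m ∧ l = p then eps n k * eps n l else 0) +
         (if k = p ∧ l = m then eps n k * eps n l else 0) -
         2 * (if k = l ∧ m = p then eps n k * eps n m else 0)) := by
  obtain ⟨q, hq⟩ := master hn hlor hsym hcyc hoffdiag
  refine ⟨q, fun i j k l m p => ?_⟩
  by_cases hij : i = j
  · subst hij
    rw [if_pos rfl]
    have hall : ∀ a : Fin n, c i i a a a a = 0 := by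
      intro a; have := hcyc i i a a a a; linarith
    have hP : ∀ a b : Fin n, c i i a a b b = -2 * c i i a b a b := by
      intro a b
      have h1' := hcyc i i a b a b
      have h2' : c i i a b b a = c i i a b a b := (hsym i i a b b a).2.2
      linarith
    have van_pair : ∀ k m p : Fin n, m ≠ p → c i i k k m p = 0 := by
      intro k m p hmp
      have e := flipinv hlor m i i k k m p
      have e2 : c i i k k m p = (sg m i * sg m i) * ((sg m k * sg m k) * (-(1:ℝ) * (1 * c i i k k m p))) := by
        rw [show sg m m = -1 from if_pos rfl, show sg m p = 1 from if_neg (Ne.symm hmp)] at e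
        exact e.trans (by ring)
      rw [sg_sq, sg_sq] at e2
      linarith
    by_cases h1 : k = m ∧ l = p
    · obtain ⟨e1, e2⟩ := h1
      subst e1; subst e2
      by_cases hkl : k = l
      · subst hkl
        rw [hall]
        simp only [and_self, if_pos rfl]
        ring
      · rw [hq i k l hkl]
        simp only [if_pos (⟨rfl, rfl⟩ : k = k ∧ l = l),
          if_neg (show ¬(k = l ∧ l = k) from fun h => hkl h.1),
          if_neg (show ¬(k = l ∧ k = l) from fun h => hkl h.1),
          eq_self_iff_true, and_self, if_true, true_and, and_true, hkl, if_false, false_and, and_false]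
        ring
    · by_cases h2 : k = p ∧ l = m
      · obtain ⟨e1, e2⟩ := h2
        subst e1; subst e2
        have hkl : k ≠ l := fun h => h1 ⟨h, h.symm⟩
        rw [(hsym i i k l l k).2.2, hq i k l hkl]
        simp only [if_pos (⟨rfl, rfl⟩ : k = k ∧ l = l),
          if_neg (show ¬(k = l ∧ l = k) from fun h => hkl h.1),
          eq_self_iff_true, and_self, if_true, true_and, and_true]
        ring
      · by_cases h3 : k = l ∧ m = p
        · obtain ⟨e1, e2⟩ := h3
          subst e1; subst e2
          have hkm : k ≠ m := fun h => h1 ⟨h, h⟩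
          rw [hP k m, hq i k m hkm]
          simp only [if_pos (⟨rfl, rfl⟩ : k = k ∧ m = m),
            if_neg (show ¬(k = m ∧ k = m) from fun h => hkm h.1),
            eq_self_iff_true, and_self, if_true, true_and, and_true, hkm, if_false, false_and, and_false]
          ring
        · rw [if_neg h1, if_neg h2, if_neg h3]
          by_cases hkl : k = l
          · subst hkl
            have hmp : m ≠ p := fun h => h3 ⟨rfl, h⟩
            rw [van_pair k m p hmp]
            ring
          · by_cases hkm : k = m
            · subst hkm
              have hlp : l ≠ p := fun h => h1 ⟨rfl, h⟩
              rw [van_l hlor i k l k p (Ne.symm hkl) (Ne.symm hkl) hlp]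
              ring
            · by_cases hkp : k = p
              · subst hkp
                have hlm : l ≠ m := fun h => h2 ⟨rfl, h⟩
                rw [van_l hlor i k l m k (Ne.symm hkl) hlm (Ne.symm hkl)]
                ring
              · rw [van_k hlor i k l m p hkl hkm hkp]
                ring
  · rw [hoffdiag i j k l m p hij, if_neg hij]
    ring


lemma sum_ite_const' {P : Prop} [Decidable P] {α : Type*} [Fintype α] (f : α → ℝ) :
    (∑ x, if P then f x else 0) = if P then ∑ x, f x else 0 := by
  split <;> simp

end proof14

theorem statement14 (n : ℕ) (hn : 3 ≤ n)
    (c : Fin n → Fin n → Fin n → Fin n → Fin n → Fin n → ℝ)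
    (hsym : ∀ i j k l m p, c i j k l m p = c j i k l m p ∧
      c i j k l m p = c i j l k m p ∧ c i j k l m p = c i j k l p m)
    (hcyc : ∀ i j k l m p, c i j k l m p + c i j k m p l + c i j k p l m = 0)
    (hlor : LorentzInv6 n c)
    (hoffdiag : ∀ i j k l m p, i ≠ j → c i j k l m p = 0) :
    ∃ B : ℝ, ∀ i j : Fin n, ∀ w : Fin n → Fin n → Fin n → Fin n → ℝ, SymW4 n w →
      (∑ k, ∑ l, ∑ m, ∑ p, c i j k l m p * w k l m p) =
        B * Rform n w * eps n i * (if i = j then 1 else 0) := by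
  obtain ⟨q, hq⟩ := pointwise hn hlor hsym hcyc hoffdiag
  refine ⟨2 * q, fun i j w hw => ?_⟩
  by_cases hij : i = j
  · subst hij
    rw [if_pos rfl]
    have split : (∑ k, ∑ l, ∑ m, ∑ p, c i i k l m p * w k l m p)
        = ∑ k, ∑ l, ∑ m, ∑ p,
          ((q * eps n i * ((if k = m ∧ l = p then eps n k * eps n l else 0) * w k l m p))
          + ((q * eps n i * ((if k = p ∧ l = m then eps n k * eps n l else 0) * w k l m p))
          - (q * eps n i * (2 * ((if k = l ∧ m = p then eps n k * eps n m else 0) * w k l m p))))) := by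
      refine Finset.sum_congr rfl fun k _ => Finset.sum_congr rfl fun l _ =>
        Finset.sum_congr rfl fun m _ => Finset.sum_congr rfl fun p _ => ?_
      rw [hq i i k l m p, if_pos rfl]
      ring
    rw [split]
    simp only [Finset.sum_add_distrib, Finset.sum_sub_distrib]
    simp only [← Finset.mul_sum]
    have h1 : (∑ k, ∑ l, ∑ m, ∑ p, (if k = m ∧ l = p then eps n k * eps n l else 0) * w k l m p)
        = ∑ k, ∑ l, eps n k * eps n l * w k l k l := by
      refine Finset.sum_congr rfl fun k _ => Finset.sum_congr rfl fun l _ => ?_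
      simp only [ite_and, ite_mul, zero_mul, sum_ite_const', Finset.sum_ite_eq,
        Finset.mem_univ, if_true]
    have h2 : (∑ k, ∑ l, ∑ m, ∑ p, (if k = p ∧ l = m then eps n k * eps n l else 0) * w k l m p)
        = ∑ k, ∑ l, eps n k * eps n l * w k l k l := by
      refine Finset.sum_congr rfl fun k _ => Finset.sum_congr rfl fun l _ => ?_
      simp only [ite_and, ite_mul, zero_mul, sum_ite_const', Finset.sum_ite_eq,
        Finset.mem_univ, if_true]
      rw [(hw k l l k).2]
    have h3 : (∑ k, ∑ l, ∑ m, ∑ p, (if k = l ∧ m = p then eps n k * eps n m else 0) * w k l m p)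
        = ∑ k, ∑ l, eps n k * eps n l * w k k l l := by
      refine Finset.sum_congr rfl fun k _ => ?_
      simp only [ite_and, ite_mul, zero_mul, sum_ite_const', Finset.sum_ite_eq,
        Finset.mem_univ, if_true]
    have hR : Rform n w = (∑ k, ∑ l, eps n k * eps n l * w k l k l)
        - ∑ k, ∑ l, eps n k * eps n l * w k k l l := by
      unfold Rform
      simp only [mul_sub, Finset.sum_sub_distrib]
    rw [h1, h2, h3, hR]
    ring
  · rw [if_neg hij]
    have hz : ∀ k l m p : Fin n, c i j k l m p = 0 := by
      intro k l m p; rw [hq i j k l m p, if_neg hij]; ring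
    simp [hz]

end GeomActions
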